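/- Let Y be a real m×n matrix with SVD Y = U Σ Vᵀ, and let r ≤ rank(Y). Then the matrix X* = U_[1:r] Σ_[1:r] V_[1:r]ᵀ formed from the r largest singular values and corresponding singular vectors minimizes ‖X − Y‖_F² over all real m×n matrices X of rank at most r (Eckart–Young theorem in Frobenius norm). -/

import Mathlib

open Matrix


namespace EYaux

lemma sum_sq_eq_trace {a b : ℕ} (A : Matrix (Fin a) (Fin b) ℝ) :
    ∑ i, ∑ j, A i j ^ 2 = Matrix.trace (Aᵀ * A) := by
  rw [Matrix.trace, Finset.sum_comm]
  simp [Matrix.diag, Matrix.mul_apply, sq]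

lemma frob_left {a b : ℕ} {U : Matrix (Fin a) (Fin a) ℝ} (hU : Uᵀ * U = 1)
    (A : Matrix (Fin a) (Fin b) ℝ) :
    ∑ i, ∑ j, (U * A) i j ^ 2 = ∑ i, ∑ j, A i j ^ 2 := by
  rw [sum_sq_eq_trace, sum_sq_eq_trace, Matrix.transpose_mul]
  rw [show Aᵀ * Uᵀ * (U * A) = Aᵀ * ((Uᵀ * U) * A) by
    simp only [Matrix.mul_assoc], hU, Matrix.one_mul]

lemma frob_right {a b : ℕ} {W : Matrix (Fin b) (Fin b) ℝ} (hW : W * Wᵀ = 1)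
    (A : Matrix (Fin a) (Fin b) ℝ) :
    ∑ i, ∑ j, (A * W) i j ^ 2 = ∑ i, ∑ j, A i j ^ 2 := by
  rw [sum_sq_eq_trace, sum_sq_eq_trace, Matrix.transpose_mul]
  rw [show Wᵀ * Aᵀ * (A * W) = Wᵀ * ((Aᵀ * A) * W) by simp only [Matrix.mul_assoc]]
  rw [Matrix.trace_mul_comm, Matrix.mul_assoc, hW, Matrix.mul_one]

lemma range_sum_trunc {m n : ℕ} (g : ℕ → ℝ) :
    ∑ t ∈ Finset.range m, (if t < n then g t else 0)
      = ∑ t ∈ Finset.range (min m n), g t := by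
  rw [← Finset.sum_subset (Finset.range_subset_range.mpr (min_le_left m n))
    (by intro x hx hx'; simp only [Finset.mem_range] at hx hx'; rw [if_neg (by omega)])]
  exact Finset.sum_congr rfl fun t ht => by
    simp only [Finset.mem_range] at ht; rw [if_pos (by omega)]

lemma frob_diag {m n : ℕ} (c : ℕ → ℝ) (M : Matrix (Fin m) (Fin n) ℝ)
    (hM : ∀ i j, M i j = if (i : ℕ) = (j : ℕ) then c i else 0) :
    ∑ i, ∑ j, M i j ^ 2 = ∑ j : Fin n, if (j : ℕ) < m then c j ^ 2 else 0 := by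
  have key : ∀ i : Fin m, ∑ j : Fin n, M i j ^ 2
      = if (i : ℕ) < n then c (i : ℕ) ^ 2 else 0 := by
    intro i
    by_cases h : (i : ℕ) < n
    · rw [if_pos h]
      rw [Finset.sum_eq_single (⟨(i : ℕ), h⟩ : Fin n)]
      · rw [hM]; simp
      · intro j _ hj
        rw [hM]
        have : (i : ℕ) ≠ (j : ℕ) := by
          intro hc; apply hj; exact (Fin.ext_iff.mpr hc.symm)
        simp [this]
      · intro hc; exact absurd (Finset.mem_univ _) hc
    · rw [if_neg h]
      apply Finset.sum_eq_zero
      intro j _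
      rw [hM]
      have : (i : ℕ) ≠ (j : ℕ) := by have := j.isLt; omega
      simp [this]
  calc ∑ i, ∑ j, M i j ^ 2
      = ∑ i : Fin m, (fun t : ℕ => if t < n then c t ^ 2 else 0) (i : ℕ) :=
        Finset.sum_congr rfl fun i _ => key i
    _ = ∑ t ∈ Finset.range m, (if t < n then c t ^ 2 else 0) := by
        exact Fin.sum_univ_eq_sum_range (fun t : ℕ => if t < n then c t ^ 2 else 0) m
    _ = ∑ t ∈ Finset.range (min m n), c t ^ 2 := range_sum_trunc _
    _ = ∑ t ∈ Finset.range (min n m), c t ^ 2 := by rw [min_comm]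
    _ = ∑ t ∈ Finset.range n, (if t < m then c t ^ 2 else 0) := (range_sum_trunc _).symm
    _ = ∑ j : Fin n, (fun t : ℕ => if t < m then c t ^ 2 else 0) (j : ℕ) := by
        exact (Fin.sum_univ_eq_sum_range (fun t : ℕ => if t < m then c t ^ 2 else 0) n).symm
    _ = ∑ j : Fin n, if (j : ℕ) < m then c j ^ 2 else 0 := rfl

lemma mulVec_diag {m n : ℕ} (σ : ℕ → ℝ) (S : Matrix (Fin m) (Fin n) ℝ)
    (hS : ∀ i j, S i j = if (i : ℕ) = (j : ℕ) then σ i else 0)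
    (u : Fin n → ℝ) :
    ∑ i : Fin m, (S.mulVec u i) ^ 2
      = ∑ j : Fin n, (if (j : ℕ) < m then σ j ^ 2 else 0) * u j ^ 2 := by
  set ut : ℕ → ℝ := fun t => if h : t < n then u ⟨t, h⟩ else 0 with hut
  have step1 : ∀ i : Fin m, S.mulVec u i = σ i * ut i := by
    intro i
    rw [Matrix.mulVec, dotProduct]
    by_cases h : (i : ℕ) < n
    · rw [Finset.sum_eq_single (⟨(i : ℕ), h⟩ : Fin n)]
      · rw [hS]; simp [hut, h]
      · intro j _ hj
        rw [hS]
        have : (i : ℕ) ≠ (j : ℕ) := fun hc => hj (Fin.ext_iff.mpr hc.symm)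
        simp [this]
      · intro hc; exact absurd (Finset.mem_univ _) hc
    · rw [Finset.sum_eq_zero fun j _ => by
        rw [hS]
        have : (i : ℕ) ≠ (j : ℕ) := by have := j.isLt; omega
        simp [this]]
      rw [hut]; simp [h]
  calc ∑ i : Fin m, (S.mulVec u i) ^ 2
      = ∑ i : Fin m, (fun t : ℕ => (σ t * ut t) ^ 2) (i : ℕ) :=
        Finset.sum_congr rfl fun i _ => by rw [step1]
    _ = ∑ t ∈ Finset.range m, (σ t * ut t) ^ 2 := by
        exact Fin.sum_univ_eq_sum_range (fun t : ℕ => (σ t * ut t) ^ 2) m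
    _ = ∑ t ∈ Finset.range m, (if t < n then σ t ^ 2 * ut t ^ 2 else 0) := by
        refine Finset.sum_congr rfl fun t _ => ?_
        by_cases h : t < n
        · rw [if_pos h, mul_pow]
        · rw [if_neg h, hut]; simp [h]
    _ = ∑ t ∈ Finset.range (min m n), σ t ^ 2 * ut t ^ 2 := range_sum_trunc _
    _ = ∑ t ∈ Finset.range (min n m), σ t ^ 2 * ut t ^ 2 := by rw [min_comm]
    _ = ∑ t ∈ Finset.range n, (if t < m then σ t ^ 2 * ut t ^ 2 else 0) :=
        (range_sum_trunc _).symm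
    _ = ∑ t ∈ Finset.range n, (fun t : ℕ => (if t < m then σ t ^ 2 else 0) * ut t ^ 2) t := by
        refine Finset.sum_congr rfl fun t _ => ?_
        by_cases h : t < m <;> simp [h]
    _ = ∑ j : Fin n, (if (j : ℕ) < m then σ (j : ℕ) ^ 2 else 0) * ut (j : ℕ) ^ 2 := by
        exact (Fin.sum_univ_eq_sum_range
          (fun t : ℕ => (if t < m then σ t ^ 2 else 0) * ut t ^ 2) n).symm
    _ = ∑ j : Fin n, (if (j : ℕ) < m then σ j ^ 2 else 0) * u j ^ 2 := by
        refine Finset.sum_congr rfl fun j _ => ?_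
        rw [hut]; simp

lemma card_filter_lt {n d : ℕ} (h : d ≤ n) :
    (Finset.univ.filter fun k : Fin n => (k : ℕ) < d).card = d := by
  refine (Finset.card_nbij (s := Finset.univ.filter fun k : Fin n => (k : ℕ) < d)
    (t := Finset.range d) (fun k => (k : ℕ)) ?_ ?_ ?_).trans (Finset.card_range d)
  · intro a ha; simp only [Finset.coe_filter, Finset.mem_coe, Finset.mem_filter, Finset.mem_univ, true_and, Set.mem_setOf_eq] at ha
    simpa using ha
  · intro a ha b hb hab; exact Fin.ext_iff.mpr hab
  · intro t ht
    simp only [Finset.coe_range, Set.mem_Iio] at ht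
    exact ⟨⟨t, lt_of_lt_of_le ht h⟩, by simp [ht], rfl⟩

lemma weights {n r : ℕ} (δ : ℕ → ℝ) (hδ0 : ∀ t, 0 ≤ δ t)
    (hδanti : ∀ k l : ℕ, k ≤ l → δ l ≤ δ k)
    (p : Fin n → ℝ) (hp0 : ∀ j, 0 ≤ p j) (hp1 : ∀ j, p j ≤ 1)
    (hrn : r ≤ n) (hsum : (n : ℝ) - r ≤ ∑ j, p j) :
    (∑ j : Fin n, if r ≤ (j : ℕ) then δ j else 0) ≤ ∑ j : Fin n, δ j * p j := by
  classical
  set A := Finset.univ.filter (fun j : Fin n => (j : ℕ) < r) with hA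
  set B := Finset.univ.filter (fun j : Fin n => ¬ (j : ℕ) < r) with hB
  have hsplit : ∀ f : Fin n → ℝ, (∑ j, f j) = ∑ j ∈ A, f j + ∑ j ∈ B, f j := by
    intro f
    rw [hA, hB, Finset.sum_filter_add_sum_filter_not]
  have hLHS : (∑ j : Fin n, if r ≤ (j : ℕ) then δ j else 0) = ∑ j ∈ B, δ j := by
    rw [hB, Finset.sum_filter]
    exact Finset.sum_congr rfl fun j _ => by simp [not_lt]
  have hcardA : A.card = r := by rw [hA]; exact card_filter_lt hrn
  have hcardB : B.card = n - r := by
    have := Finset.card_filter_add_card_filter_not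
      (s := (Finset.univ : Finset (Fin n))) (p := fun j : Fin n => (j : ℕ) < r)
    rw [Finset.card_univ, Fintype.card_fin, ← hA, ← hB, hcardA] at this
    omega
  set c := δ r with hc
  have h1 : ∑ j ∈ B, δ (j : ℕ) * (1 - p j) ≤ c * ∑ j ∈ B, (1 - p j) := by
    rw [Finset.mul_sum]
    refine Finset.sum_le_sum fun j hj => ?_
    have hjB : r ≤ (j : ℕ) := by
      rw [hB] at hj; simp only [Finset.mem_filter, not_lt] at hj; exact hj.2
    exact mul_le_mul_of_nonneg_right (hδanti r j hjB) (by linarith [hp1 j])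
  have h2 : ∑ j ∈ B, (1 - p j) ≤ ∑ j ∈ A, p j := by
    have e1 : ∑ j ∈ B, (1 - p j) = (B.card : ℝ) - ∑ j ∈ B, p j := by
      rw [Finset.sum_sub_distrib, Finset.sum_const, nsmul_eq_mul, mul_one]
    have e2 : (B.card : ℝ) = (n : ℝ) - r := by
      rw [hcardB, Nat.cast_sub hrn]
    have := hsplit p
    rw [e1, e2]
    linarith
  have h3 : c * ∑ j ∈ A, p j ≤ ∑ j ∈ A, δ (j : ℕ) * p j := by
    rw [Finset.mul_sum]
    refine Finset.sum_le_sum fun j hj => ?_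
    have hjA : (j : ℕ) ≤ r := by
      rw [hA] at hj; simp only [Finset.mem_filter] at hj; omega
    exact mul_le_mul_of_nonneg_right (hδanti (j : ℕ) r hjA) (hp0 j)
  have h4 : ∑ j ∈ B, δ (j : ℕ) = ∑ j ∈ B, δ (j : ℕ) * p j + ∑ j ∈ B, δ (j : ℕ) * (1 - p j) := by
    rw [← Finset.sum_add_distrib]
    exact Finset.sum_congr rfl fun j _ => by ring
  have h5 : c * ∑ j ∈ B, (1 - p j) ≤ c * ∑ j ∈ A, p j :=
    mul_le_mul_of_nonneg_left h2 (hδ0 r)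
  rw [hLHS, hsplit (fun j => δ (j : ℕ) * p j)]
  linarith

lemma key {m n : ℕ} (σ : ℕ → ℝ) (hσ0 : ∀ k, 0 ≤ σ k)
    (hσanti : ∀ k l : ℕ, k ≤ l → σ l ≤ σ k)
    (S : Matrix (Fin m) (Fin n) ℝ)
    (hS : ∀ i j, S i j = if (i : ℕ) = (j : ℕ) then σ i else 0)
    (r : ℕ) (hrn : r ≤ n)
    (Z : Matrix (Fin m) (Fin n) ℝ) (hZr : Z.rank ≤ r) :
    (∑ j : Fin n, if r ≤ (j : ℕ) then (if (j : ℕ) < m then σ (j : ℕ) ^ 2 else 0) else 0)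
      ≤ ∑ i, ∑ j, (Z i j - S i j) ^ 2 := by
  classical
  set δ : ℕ → ℝ := fun t => if t < m then σ t ^ 2 else 0 with hδ
  have hδ0 : ∀ t, 0 ≤ δ t := fun t => by
    rw [hδ]; dsimp only; split <;> positivity
  have hδanti : ∀ k l : ℕ, k ≤ l → δ l ≤ δ k := by
    intro k l hkl
    rw [hδ]; dsimp only
    by_cases hl : l < m
    · rw [if_pos hl, if_pos (lt_of_le_of_lt hkl hl)]
      exact pow_le_pow_left₀ (hσ0 l) (hσanti k l hkl) 2
    · rw [if_neg hl]
      split <;> positivity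
  -- the kernel of Z and an orthonormal basis adapted to it
  let e : EuclideanSpace ℝ (Fin n) ≃ₗ[ℝ] (Fin n → ℝ) := WithLp.linearEquiv 2 ℝ (Fin n → ℝ)
  let K : Submodule ℝ (EuclideanSpace ℝ (Fin n)) :=
    (LinearMap.ker Z.mulVecLin).map (e.symm : (Fin n → ℝ) →ₗ[ℝ] EuclideanSpace ℝ (Fin n))
  set d := Module.finrank ℝ K with hd
  have hdker : d = Module.finrank ℝ (LinearMap.ker Z.mulVecLin) := by
    rw [hd]; exact LinearEquiv.finrank_map_eq e.symm _
  have hrank : Z.rank + Module.finrank ℝ (LinearMap.ker Z.mulVecLin) = n := by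
    have h1 := LinearMap.finrank_range_add_finrank_ker Z.mulVecLin
    rw [Module.finrank_fin_fun] at h1
    exact h1
  have hnrd : n ≤ r + d := by omega
  have hdn : d ≤ n := by omega
  have hKmem : ∀ x : EuclideanSpace ℝ (Fin n), x ∈ K → Z.mulVec (e x) = 0 := by
    intro x hx
    rw [Submodule.mem_map_equiv, LinearMap.mem_ker] at hx
    simpa using hx
  let b := stdOrthonormalBasis ℝ K
  let v : Fin n → EuclideanSpace ℝ (Fin n) := fun k =>
    if h : (k : ℕ) < d then (b ⟨(k : ℕ), h⟩ : EuclideanSpace ℝ (Fin n)) else 0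
  have hvmem : ∀ (k : Fin n) (h : (k : ℕ) < d), v k ∈ K := by
    intro k h
    simp only [v, dif_pos h]
    exact (b ⟨(k : ℕ), h⟩).2
  have hv : Orthonormal ℝ (({k : Fin n | (k : ℕ) < d} : Set (Fin n)).restrict v) := by
    rw [orthonormal_iff_ite]
    rintro ⟨i, hi⟩ ⟨j, hj⟩
    have hi' : (i : ℕ) < d := hi
    have hj' : (j : ℕ) < d := hj
    change inner ℝ (v i) (v j) = _
    simp only [Set.restrict_apply, v, dif_pos hi', dif_pos hj']
    rw [← Submodule.coe_inner, orthonormal_iff_ite.mp b.orthonormal]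
    by_cases h : i = j
    · subst h; simp
    · rw [if_neg (by simp [Fin.ext_iff]; omega), if_neg (by simp [Subtype.ext_iff]; exact h)]
  have hcard : Module.finrank ℝ (EuclideanSpace ℝ (Fin n)) = Fintype.card (Fin n) := by
    simp
  obtain ⟨w, hw⟩ := hv.exists_orthonormalBasis_extension_of_card_eq hcard
  let u : Fin n → Fin n → ℝ := fun k => e (w k)
  have hu_ker : ∀ k : Fin n, (k : ℕ) < d → Z.mulVec (u k) = 0 := by
    intro k hk
    have hwk : w k = v k := hw k hk
    show Z.mulVec (e (w k)) = 0
    rw [hwk]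
    exact hKmem (v k) (hvmem k hk)
  have hu_orth : ∀ k l, ∑ j, u k j * u l j = if k = l then 1 else 0 := by
    intro k l
    have h := orthonormal_iff_ite.mp w.orthonormal k l
    rw [PiLp.inner_apply] at h
    simpa [u, e, RCLike.inner_apply, conj_trivial, mul_comm] using h
  -- the orthogonal matrix of the basis
  let Wm : Matrix (Fin n) (Fin n) ℝ := Matrix.of fun j k => u k j
  have hWtW : Wmᵀ * Wm = 1 := by
    ext k l
    rw [Matrix.mul_apply, Matrix.one_apply]
    simpa [Wm, Matrix.transpose_apply] using hu_orth k l
  have hWWt : Wm * Wmᵀ = 1 := mul_eq_one_comm.mp hWtW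
  have hrows : ∀ j : Fin n, ∑ k, (u k j) ^ 2 = 1 := by
    intro j
    have := congrFun (congrFun hWWt j) j
    rw [Matrix.mul_apply, Matrix.one_apply_eq] at this
    simpa [Wm, Matrix.transpose_apply, sq] using this
  -- weights p
  set filt := Finset.univ.filter (fun k : Fin n => (k : ℕ) < d) with hfilt
  set p : Fin n → ℝ := fun j => ∑ k ∈ filt, (u k j) ^ 2 with hp
  have hp0 : ∀ j, 0 ≤ p j := fun j => Finset.sum_nonneg fun k _ => sq_nonneg _
  have hp1 : ∀ j, p j ≤ 1 := by
    intro j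
    rw [hp]
    calc ∑ k ∈ filt, (u k j) ^ 2 ≤ ∑ k, (u k j) ^ 2 :=
          Finset.sum_le_sum_of_subset_of_nonneg (Finset.filter_subset _ _)
            (fun k _ _ => sq_nonneg _)
      _ = 1 := hrows j
  have hpsum : (n : ℝ) - r ≤ ∑ j, p j := by
    have e1 : ∑ j, p j = ∑ k ∈ filt, ∑ j, (u k j) ^ 2 := by
      rw [hp]; exact Finset.sum_comm
    have e2 : ∀ k ∈ filt, ∑ j, (u k j) ^ 2 = 1 := by
      intro k _
      have := congrFun (congrFun hWtW k) k
      rw [Matrix.mul_apply, Matrix.one_apply_eq] at this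
      simpa [Wm, Matrix.transpose_apply, sq] using this
    rw [e1, Finset.sum_congr rfl e2, Finset.sum_const, nsmul_eq_mul, mul_one,
      hfilt, card_filter_lt hdn]
    have : (n : ℝ) ≤ (r : ℝ) + d := by exact_mod_cast Nat.cast_le.mpr hnrd
    linarith
  -- main chain
  have main : ∑ j : Fin n, δ (j : ℕ) * p j ≤ ∑ i, ∑ j, (Z i j - S i j) ^ 2 := by
    have c1 : ∑ i, ∑ j, (Z i j - S i j) ^ 2 = ∑ i, ∑ j, ((Z - S) i j) ^ 2 := by
      simp [Matrix.sub_apply]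
    have c2 : ∑ i, ∑ j, ((Z - S) i j) ^ 2 = ∑ i, ∑ j, (((Z - S) * Wm) i j) ^ 2 :=
      (frob_right hWWt (Z - S)).symm
    have c3 : ∑ i, ∑ j, (((Z - S) * Wm) i j) ^ 2
        = ∑ k, ∑ i, (((Z - S) * Wm) i k) ^ 2 := Finset.sum_comm
    have c4 : ∀ k : Fin n, (k : ℕ) < d →
        ∑ i, (((Z - S) * Wm) i k) ^ 2 = ∑ j : Fin n, δ (j : ℕ) * (u k j) ^ 2 := by
      intro k hk
      have hcol : ∀ i, ((Z - S) * Wm) i k = - (S.mulVec (u k) i) := by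
        intro i
        rw [Matrix.mul_apply]
        have : ∑ j, (Z - S) i j * Wm j k
            = Z.mulVec (u k) i - S.mulVec (u k) i := by
          rw [Matrix.mulVec, Matrix.mulVec, dotProduct, dotProduct,
            ← Finset.sum_sub_distrib]
          exact Finset.sum_congr rfl fun j _ => by
            simp [Wm, Matrix.sub_apply, sub_mul]
        rw [this, hu_ker k hk]
        simp
      calc ∑ i, (((Z - S) * Wm) i k) ^ 2 = ∑ i, (S.mulVec (u k) i) ^ 2 := by
            refine Finset.sum_congr rfl fun i _ => ?_
            rw [hcol i, neg_pow]
            simp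
        _ = ∑ j : Fin n, δ (j : ℕ) * (u k j) ^ 2 := mulVec_diag σ S hS (u k)
    calc ∑ j : Fin n, δ (j : ℕ) * p j
        = ∑ j : Fin n, ∑ k ∈ filt, δ (j : ℕ) * (u k j) ^ 2 := by
          refine Finset.sum_congr rfl fun j _ => ?_
          rw [hp, Finset.mul_sum]
      _ = ∑ k ∈ filt, ∑ j : Fin n, δ (j : ℕ) * (u k j) ^ 2 := Finset.sum_comm
      _ = ∑ k ∈ filt, ∑ i, (((Z - S) * Wm) i k) ^ 2 := by
          refine Finset.sum_congr rfl fun k hk => ?_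
          rw [hfilt] at hk
          simp only [Finset.mem_filter] at hk
          exact (c4 k hk.2).symm
      _ ≤ ∑ k, ∑ i, (((Z - S) * Wm) i k) ^ 2 :=
          Finset.sum_le_sum_of_subset_of_nonneg (Finset.filter_subset _ _)
            (fun k _ _ => Finset.sum_nonneg fun i _ => sq_nonneg _)
      _ = ∑ i, ∑ j, (Z i j - S i j) ^ 2 := by rw [c1, c2, c3]
  calc (∑ j : Fin n, if r ≤ (j : ℕ) then (if (j : ℕ) < m then σ (j : ℕ) ^ 2 else 0) else 0)
      = ∑ j : Fin n, if r ≤ (j : ℕ) then δ (j : ℕ) else 0 := by rw [hδ]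
    _ ≤ ∑ j : Fin n, δ (j : ℕ) * p j := weights δ hδ0 hδanti p hp0 hp1 hrn hpsum
    _ ≤ ∑ i, ∑ j, (Z i j - S i j) ^ 2 := main

end EYaux

/-- Eckart–Young theorem (Frobenius norm). Let Y = U S Vᵀ be an SVD of the real
m×n matrix Y, where U, V are orthogonal and S is rectangular diagonal with
nonincreasing nonnegative singular values σ. For r ≤ rank Y, the truncation
X* = U S_r Vᵀ (keeping the r largest singular values) has rank at most r and
minimizes ‖X − Y‖_F² over all m×n matrices X of rank at most r. -/
theorem eckart_young {m n : ℕ} (Y : Matrix (Fin m) (Fin n) ℝ)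
    (U : Matrix (Fin m) (Fin m) ℝ) (V : Matrix (Fin n) (Fin n) ℝ)
    (σ : ℕ → ℝ)
    (hU : U * U.transpose = 1) (hU' : U.transpose * U = 1)
    (hV : V * V.transpose = 1) (hV' : V.transpose * V = 1)
    (hσ0 : ∀ k, 0 ≤ σ k) (hσanti : ∀ k l, k ≤ l → σ l ≤ σ k)
    (S : Matrix (Fin m) (Fin n) ℝ)
    (hS : ∀ i j, S i j = if (i : ℕ) = (j : ℕ) then σ i else 0)
    (hY : Y = U * S * V.transpose)
    (r : ℕ) (hr : r ≤ Y.rank)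
    (Sr : Matrix (Fin m) (Fin n) ℝ)
    (hSr : ∀ i j, Sr i j = if (i : ℕ) = (j : ℕ) ∧ (i : ℕ) < r then σ i else 0)
    (Xstar : Matrix (Fin m) (Fin n) ℝ) (hX : Xstar = U * Sr * V.transpose) :
    Xstar.rank ≤ r ∧
    ∀ X : Matrix (Fin m) (Fin n) ℝ, X.rank ≤ r →
      (∑ i, ∑ j, (Xstar i j - Y i j) ^ 2) ≤ ∑ i, ∑ j, (X i j - Y i j) ^ 2 := by
  classical
  have hrn : r ≤ n := le_trans hr Y.rank_le_width
  constructor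
  · -- rank of the truncation is at most r
    have hfac : Sr = (Matrix.of fun (i : Fin m) (k : Fin r) =>
        if (i : ℕ) = (k : ℕ) then σ i else 0) *
        (Matrix.of fun (k : Fin r) (j : Fin n) => if (k : ℕ) = (j : ℕ) then (1 : ℝ) else 0) := by
      ext i j
      rw [hSr, Matrix.mul_apply]
      by_cases h : (i : ℕ) = (j : ℕ) ∧ (i : ℕ) < r
      · rw [if_pos h]
        rw [Finset.sum_eq_single (⟨(i : ℕ), h.2⟩ : Fin r)]
        · simp [h.1.symm]
        · intro k _ hk
          have : (i : ℕ) ≠ (k : ℕ) := fun hc => hk (Fin.ext_iff.mpr hc.symm)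
          simp [this]
        · intro hc; exact absurd (Finset.mem_univ _) hc
      · rw [if_neg h]
        symm
        apply Finset.sum_eq_zero
        intro k _
        by_cases h1 : (i : ℕ) = (k : ℕ)
        · by_cases h2 : (k : ℕ) = (j : ℕ)
          · exact absurd ⟨h1.trans h2, h1 ▸ k.isLt⟩ h
          · simp [h2]
        · simp [h1]
    rw [hX, hfac]
    calc ((U * ((Matrix.of fun (i : Fin m) (k : Fin r) =>
          if (i : ℕ) = (k : ℕ) then σ i else 0) *
          (Matrix.of fun (k : Fin r) (j : Fin n) =>
          if (k : ℕ) = (j : ℕ) then (1 : ℝ) else 0)) * Vᵀ)).rank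
        ≤ ((Matrix.of fun (i : Fin m) (k : Fin r) =>
          if (i : ℕ) = (k : ℕ) then σ i else 0) *
          (Matrix.of fun (k : Fin r) (j : Fin n) =>
          if (k : ℕ) = (j : ℕ) then (1 : ℝ) else 0)).rank := by
          refine le_trans (Matrix.rank_mul_le_left _ _) (Matrix.rank_mul_le_right _ _)
      _ ≤ ((Matrix.of fun (k : Fin r) (j : Fin n) =>
          if (k : ℕ) = (j : ℕ) then (1 : ℝ) else 0) :
            Matrix (Fin r) (Fin n) ℝ).rank := Matrix.rank_mul_le_right _ _
      _ ≤ r := le_trans (Matrix.rank_le_card_height _) (by simp)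
  · intro X hXr
    set Z := Uᵀ * X * V with hZ
    have hZr : Z.rank ≤ r := by
      calc Z.rank ≤ (Uᵀ * X).rank := Matrix.rank_mul_le_left _ _
        _ ≤ X.rank := Matrix.rank_mul_le_right _ _
        _ ≤ r := hXr
    have hUXV : U * (Uᵀ * X * V) * Vᵀ = X := by
      calc U * (Uᵀ * X * V) * Vᵀ = (U * Uᵀ) * (X * (V * Vᵀ)) := by
            simp only [Matrix.mul_assoc]
        _ = X := by rw [hU, hV, Matrix.one_mul, Matrix.mul_one]
    have hXY : X - Y = U * ((Z - S) * Vᵀ) := by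
      have e1 : U * (Uᵀ * X * V * Vᵀ) = X := by rw [← Matrix.mul_assoc]; exact hUXV
      rw [hY, hZ, Matrix.sub_mul, Matrix.mul_sub, e1, Matrix.mul_assoc]
    have hXsY : Xstar - Y = U * ((Sr - S) * Vᵀ) := by
      rw [hY, hX, Matrix.sub_mul, Matrix.mul_sub]
      simp only [Matrix.mul_assoc]
    have hL : (∑ i, ∑ j, (Xstar i j - Y i j) ^ 2)
        = ∑ j : Fin n, if r ≤ (j : ℕ) then (if (j : ℕ) < m then σ (j : ℕ) ^ 2 else 0) else 0 := by
      have hVt : Vᵀ * Vᵀᵀ = 1 := by rw [Matrix.transpose_transpose]; exact hV'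
      have hdiag : ∀ i j, (Sr - S) i j
          = if (i : ℕ) = (j : ℕ) then (fun t : ℕ => if t < r then 0 else -σ t) (i : ℕ) else 0 := by
        intro i j
        rw [Matrix.sub_apply, hSr, hS]
        by_cases h1 : (i : ℕ) = (j : ℕ)
        · simp only [h1, if_pos rfl, true_and]
          split_ifs <;> ring
        · simp [h1]
      calc (∑ i, ∑ j, (Xstar i j - Y i j) ^ 2)
          = ∑ i, ∑ j, ((Xstar - Y) i j) ^ 2 := by simp [Matrix.sub_apply]
        _ = ∑ i, ∑ j, ((U * ((Sr - S) * Vᵀ)) i j) ^ 2 := by rw [hXsY]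
        _ = ∑ i, ∑ j, (((Sr - S) * Vᵀ) i j) ^ 2 := EYaux.frob_left hU' _
        _ = ∑ i, ∑ j, ((Sr - S) i j) ^ 2 := EYaux.frob_right hVt _
        _ = ∑ j : Fin n, if (j : ℕ) < m
              then ((fun t : ℕ => if t < r then 0 else -σ t) (j : ℕ)) ^ 2 else 0 :=
            by exact EYaux.frob_diag (fun t : ℕ => if t < r then 0 else -σ t) _ hdiag
        _ = ∑ j : Fin n, if r ≤ (j : ℕ)
              then (if (j : ℕ) < m then σ (j : ℕ) ^ 2 else 0) else 0 := by
            refine Finset.sum_congr rfl fun j _ => ?_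
            show (if (j : ℕ) < m then (if (j : ℕ) < r then (0:ℝ) else -σ (j : ℕ)) ^ 2 else 0)
              = if r ≤ (j : ℕ) then (if (j : ℕ) < m then σ (j : ℕ) ^ 2 else 0) else 0
            by_cases h1 : (j : ℕ) < m
            · by_cases h2 : (j : ℕ) < r
              · rw [if_pos h1, if_pos h2, if_neg (not_le.mpr h2)]
                norm_num
              · rw [if_pos h1, if_neg h2, if_pos (not_lt.mp h2), if_pos h1, neg_sq]
            · simp [h1]
    have hR : (∑ i, ∑ j, (X i j - Y i j) ^ 2) = ∑ i, ∑ j, (Z i j - S i j) ^ 2 := by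
      have hVt : Vᵀ * Vᵀᵀ = 1 := by rw [Matrix.transpose_transpose]; exact hV'
      calc (∑ i, ∑ j, (X i j - Y i j) ^ 2)
          = ∑ i, ∑ j, ((X - Y) i j) ^ 2 := by simp [Matrix.sub_apply]
        _ = ∑ i, ∑ j, ((U * ((Z - S) * Vᵀ)) i j) ^ 2 := by rw [hXY]
        _ = ∑ i, ∑ j, (((Z - S) * Vᵀ) i j) ^ 2 := EYaux.frob_left hU' _
        _ = ∑ i, ∑ j, ((Z - S) i j) ^ 2 := EYaux.frob_right hVt _
        _ = ∑ i, ∑ j, (Z i j - S i j) ^ 2 := by simp [Matrix.sub_apply]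
    rw [hL, hR]
    exact EYaux.key σ hσ0 hσanti S hS r hrn Z hZr
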